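/- arXiv:1510.04931 — 2 statements merged into one kernel-verified Lean document; each statement's English description precedes it below -/
import Mathlib

section
/- Let ξ be a CCS, π a policy, e⁰ ∈ E with r(e⁰) = 0, ε ∈ (0,1], ν the π-dogmatic environment for ξ, and ξ' := (1/2)·ν + (ε/2)·ξ. Then for every history h = ae_{<t} consistent with π with Γ_t > 0 and ξ(e_{<t} ∣ a_{<t}) > 0, and for α := π(h), the on-policy values agree: V^π_{ξ'}(hα) = V^π_ξ(hα), and consequently V^π_{ξ'}(h) = V^π_ξ(h). -/
open scoped Classical

/-- A history: a finite alternating sequence of action–percept pairs. -/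
abbrev Hist (A E : Type*) := List (A × E)

/-- A policy maps histories to actions. -/
abbrev Policy (A E : Type*) := Hist A E → A

/-- A chronological conditional semimeasure (CCS, environment):
values in `[0,1]`, and the chronological semimeasure condition. -/
structure CCS (A E : Type*) [Fintype E] where
  val : Hist A E → ℝ
  nonneg : ∀ h, 0 ≤ val h
  le_one : ∀ h, val h ≤ 1
  chrono : ∀ (h : Hist A E) (a : A), (∑ e : E, val (h ++ [(a, e)])) ≤ val h

/-- `Gam γ t = Γ_t = ∑_{i ≥ t} γ_i`, the discount normalization factor. -/
noncomputable def Gam (γ : ℕ → ℝ) (t : ℕ) : ℝ := ∑' i : ℕ, γ (t + i)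

/-- Extend a history by a list of percepts, with actions chosen by the policy `π`. -/
def extendH {A E : Type*} (π : Policy A E) : Hist A E → List E → Hist A E
  | h, [] => h
  | h, e :: es => extendH π (h ++ [(π h, e)]) es

/-- The value `V^π_ν(ae_{<t})` of policy `π` in environment `ν` given history `h = ae_{<t}`
(with `t = h.length + 1`); `0` whenever `Γ_t ≤ 0` or `ν(e_{<t} ∣ a_{<t}) ≤ 0`. -/
noncomputable def V {A E : Type*} [Fintype E] (γ : ℕ → ℝ) (r : E → ℝ)
    (π : Policy A E) (ν : CCS A E) (h : Hist A E) : ℝ :=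
  if 0 < Gam γ (h.length + 1) ∧ 0 < ν.val h then
    (1 / (Gam γ (h.length + 1) * ν.val h)) *
      ∑' n : ℕ, γ (h.length + 1 + n) *
        ∑ es : Fin (n + 1) → E,
          r (es (Fin.last n)) * ν.val (extendH π h (List.ofFn es))
  else 0

/-- The value `V^π_ν(h a)` of a history ending in the action `a`:
the action at time `t` is `a`, and `π` is followed from time `t+1` on. -/
noncomputable def Vact {A E : Type*} [Fintype E] (γ : ℕ → ℝ) (r : E → ℝ)
    (π : Policy A E) (ν : CCS A E) (h : Hist A E) (a : A) : ℝ :=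
  V γ r (fun h' => if h' = h then a else π h') ν h

/-- The optimal value `V^*_ν(h) = sup_π V^π_ν(h)`. -/
noncomputable def VOpt {A E : Type*} [Fintype E] (γ : ℕ → ℝ) (r : E → ℝ)
    (ν : CCS A E) (h : Hist A E) : ℝ :=
  ⨆ π : Policy A E, V γ r π ν h

/-- The optimal value `V^*_ν(h a)` of a history ending in an action. -/
noncomputable def VOptAct {A E : Type*} [Fintype E] (γ : ℕ → ℝ) (r : E → ℝ)
    (ν : CCS A E) (h : Hist A E) (a : A) : ℝ :=
  ⨆ π : Policy A E, Vact γ r π ν h a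

/-- A history is consistent with `π` iff each of its actions is the one chosen by `π`. -/
def Consistent {A E : Type*} (π : Policy A E) (h : Hist A E) : Prop :=
  ∀ (k : ℕ) (hk : k < h.length), (h.get ⟨k, hk⟩).1 = π (h.take k)

/-- Auxiliary function for the dogmatic environment: `pre` is the consistent
prefix processed so far, the second argument is the rest of the history. -/
noncomputable def dogmaAux {A E : Type*} [Fintype E] (ξ : CCS A E) (π : Policy A E)
    (e0 : E) : Hist A E → Hist A E → ℝ
  | pre, [] => ξ.val pre
  | pre, (a, e) :: rest =>
    if a = π pre then dogmaAux ξ π e0 (pre ++ [(a, e)]) rest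
    else if e = e0 ∧ ∀ p ∈ rest, p.2 = e0 then ξ.val pre else 0

/-- The `π`-dogmatic environment for `ξ`: mimics `ξ` while the actions follow `π`;
from the first deviation on it deterministically emits `e0` and freezes the mass. -/
noncomputable def dogma {A E : Type*} [Fintype E] (ξ : CCS A E) (π : Policy A E)
    (e0 : E) (h : Hist A E) : ℝ :=
  dogmaAux ξ π e0 [] h

/-- A CCS has full support iff it is positive on every history. -/
def FullSupport {A E : Type*} [Fintype E] (ξ : CCS A E) : Prop :=
  ∀ h : Hist A E, 0 < ξ.val h


lemma consistent_snoc {A E : Type*} (π : Policy A E) (h : Hist A E)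
    (hc : Consistent π h) (e : E) : Consistent π (h ++ [(π h, e)]) := by
  intro k hk
  have hlen : (h ++ [(π h, e)]).length = h.length + 1 := by simp
  rw [hlen] at hk
  rcases Nat.lt_succ_iff_lt_or_eq.mp hk with hk' | rfl
  · have h1 : (h ++ [(π h, e)]).get ⟨k, by simp; omega⟩ = h.get ⟨k, hk'⟩ := by
      simp [List.getElem_append_left, hk']
    have h2 : (h ++ [(π h, e)]).take k = h.take k :=
      List.take_append_of_le_length (le_of_lt hk')
    simp only [h1, h2]
    exact hc k hk'
  · have h1 : (h ++ [(π h, e)]).get ⟨h.length, by simp⟩ = (π h, e) := by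
      simp
    have h2 : (h ++ [(π h, e)]).take h.length = h := by
      rw [List.take_append_of_le_length le_rfl, List.take_length]
    simp only [h1, h2]

lemma consistent_extendH {A E : Type*} (π : Policy A E) (es : List E) :
    ∀ h : Hist A E, Consistent π h → Consistent π (extendH π h es) := by
  induction es with
  | nil => intro h hc; exact hc
  | cons e es ih =>
      intro h hc
      exact ih _ (consistent_snoc π h hc e)

lemma dogmaAux_consistent {A E : Type*} [Fintype E] (ξ : CCS A E) (π : Policy A E)
    (e0 : E) (rest : Hist A E) :
    ∀ pre : Hist A E,
      (∀ (i : ℕ) (hi : i < rest.length), (rest.get ⟨i, hi⟩).1 = π (pre ++ rest.take i)) →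
      dogmaAux ξ π e0 pre rest = ξ.val (pre ++ rest) := by
  induction rest with
  | nil => intro pre _; simp [dogmaAux]
  | cons p rest ih =>
      intro pre hyp
      obtain ⟨a, e⟩ := p
      have h0 : a = π pre := by
        have := hyp 0 (by simp)
        simpa using this
      rw [show dogmaAux ξ π e0 pre ((a, e) :: rest)
            = if a = π pre then dogmaAux ξ π e0 (pre ++ [(a, e)]) rest
              else if e = e0 ∧ ∀ p ∈ rest, p.2 = e0 then ξ.val pre else 0 from rfl,
          if_pos h0]
      have := ih (pre ++ [(a, e)]) (fun i hi => by
        have := hyp (i + 1) (by simpa using Nat.succ_lt_succ hi)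
        simpa using this)
      simpa using this

lemma dogma_consistent {A E : Type*} [Fintype E] (ξ : CCS A E) (π : Policy A E)
    (e0 : E) (h : Hist A E) (hc : Consistent π h) : dogma ξ π e0 h = ξ.val h := by
  have := dogmaAux_consistent ξ π e0 h [] (fun i hi => by
    have := hc i hi
    simpa using this)
  simpa [dogma] using this

/-- **On-policy values agree.** With `ξ' = (1/2)·ν + (ε/2)·ξ` for the `π`-dogmatic `ν`,
on `π`-consistent histories the on-policy values of `ξ'` and `ξ` coincide. -/
theorem dogmatic_on_policy {A E : Type*} [Fintype A] [Nonempty A] [Fintype E] [Nonempty E]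
    (γ : ℕ → ℝ) (hγ0 : ∀ t, 0 ≤ γ t) (hγs : Summable γ)
    (r : E → ℝ) (hr : ∀ e : E, 0 ≤ r e ∧ r e ≤ 1)
    (ξ : CCS A E) (π : Policy A E) (e0 : E) (hr0 : r e0 = 0)
    (ε : ℝ) (hε0 : 0 < ε) (hε1 : ε ≤ 1)
    (ν ξ' : CCS A E)
    (hν : ∀ h : Hist A E, ν.val h = dogma ξ π e0 h)
    (hξ' : ∀ h : Hist A E, ξ'.val h = (1 / 2) * ν.val h + (ε / 2) * ξ.val h)
    (h : Hist A E) (hcons : Consistent π h)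
    (hΓ : 0 < Gam γ (h.length + 1)) (hpos : 0 < ξ.val h) :
    Vact γ r π ξ' h (π h) = Vact γ r π ξ h (π h) ∧
    V γ r π ξ' h = V γ r π ξ h := by
  set c : ℝ := (1 + ε) / 2 with hc
  have hc0 : 0 < c := by positivity
  have hkey : ∀ h' : Hist A E, Consistent π h' → ξ'.val h' = c * ξ.val h' := by
    intro h' hch
    rw [hξ', hν, dogma_consistent ξ π e0 h' hch]
    ring
  have hextc : ∀ es : List E, Consistent π (extendH π h es) :=
    fun es => consistent_extendH π es h hcons
  have hxc : ξ'.val h = c * ξ.val h := hkey h hcons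
  have main : V γ r π ξ' h = V γ r π ξ h := by
    unfold V
    rw [if_pos ⟨hΓ, by rw [hxc]; exact mul_pos hc0 hpos⟩, if_pos ⟨hΓ, hpos⟩, hxc]
    have hts : (∑' n : ℕ, γ (h.length + 1 + n) *
          ∑ es : Fin (n + 1) → E,
            r (es (Fin.last n)) * ξ'.val (extendH π h (List.ofFn es)))
        = c * ∑' n : ℕ, γ (h.length + 1 + n) *
          ∑ es : Fin (n + 1) → E,
            r (es (Fin.last n)) * ξ.val (extendH π h (List.ofFn es)) := by
      rw [← tsum_mul_left]
      refine tsum_congr fun n => ?_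
      rw [Finset.sum_congr rfl (fun es _ => by
        rw [hkey _ (hextc (List.ofFn es))])]
      rw [show (∑ es : Fin (n + 1) → E,
            r (es (Fin.last n)) * (c * ξ.val (extendH π h (List.ofFn es))))
          = c * ∑ es : Fin (n + 1) → E,
            r (es (Fin.last n)) * ξ.val (extendH π h (List.ofFn es)) by
        rw [Finset.mul_sum]; exact Finset.sum_congr rfl fun es _ => by ring]
      ring
    rw [hts]
    field_simp
  refine ⟨?_, main⟩
  have hπ : (fun h' => if h' = h then π h else π h') = π := by
    funext h'; split <;> simp_all
  unfold Vact
  rw [hπ]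
  exact main
end

section
/- Let ξ be a CCS, π a policy, e⁰ ∈ E with r(e⁰) = 0, ε ∈ (0,1], ν the π-dogmatic environment for ξ, and ξ' := (1/2)·ν + (ε/2)·ξ. Then for every history h = ae_{<t} consistent with π with Γ_t > 0 and ξ(e_{<t} ∣ a_{<t}) > 0, and for every action β ∈ A with β ≠ π(h), the optimal value after deviating is bounded: V^*_{ξ'}(hβ) ≤ ε/(1+ε) < ε. -/
open scoped Classical

section DevAux
variable {A E : Type*} [Fintype E]

lemma dogmaAux_cons (ξ : CCS A E) (π : Policy A E) (e0 : E) (pre : Hist A E)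
    (a : A) (e : E) (rest : Hist A E) :
    dogmaAux ξ π e0 pre ((a, e) :: rest) =
      if a = π pre then dogmaAux ξ π e0 (pre ++ [(a, e)]) rest
      else if e = e0 ∧ ∀ p ∈ rest, p.2 = e0 then ξ.val pre else 0 := by
  rfl

lemma dogmaAux_nil (ξ : CCS A E) (π : Policy A E) (e0 : E) (pre : Hist A E) :
    dogmaAux ξ π e0 pre [] = ξ.val pre := rfl

lemma dogmaAux_append (ξ : CCS A E) (π : Policy A E) (e0 : E) :
    ∀ (c pre rest : Hist A E),
      (∀ k (hk : k < c.length), (c.get ⟨k, hk⟩).1 = π (pre ++ c.take k)) →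
      dogmaAux ξ π e0 pre (c ++ rest) = dogmaAux ξ π e0 (pre ++ c) rest
  | [], pre, rest, _ => by simp
  | (a, e) :: c, pre, rest, hc => by
      have h0 : a = π pre := by simpa using hc 0 (by simp)
      have h1 : pre ++ (a, e) :: c = (pre ++ [(a, e)]) ++ c := by simp
      rw [List.cons_append, dogmaAux_cons, if_pos h0, h1]
      refine dogmaAux_append ξ π e0 c (pre ++ [(a, e)]) rest ?_
      intro k hk
      have := hc (k + 1) (by simpa using Nat.succ_lt_succ hk)
      simpa [List.append_assoc] using this

lemma dogma_of_consistent (ξ : CCS A E) (π : Policy A E) (e0 : E) (h : Hist A E)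
    (hcons : Consistent π h) : dogma ξ π e0 h = ξ.val h := by
  have := dogmaAux_append ξ π e0 h [] []
    (by intro k hk; simpa using hcons k hk)
  simpa [dogma, dogmaAux_nil] using this

lemma dogma_of_deviate (ξ : CCS A E) (π : Policy A E) (e0 : E) (h : Hist A E)
    (hcons : Consistent π h) (a : A) (haπ : a ≠ π h) (e : E) (c : Hist A E) :
    dogma ξ π e0 (h ++ (a, e) :: c) =
      if e = e0 ∧ ∀ p ∈ c, p.2 = e0 then ξ.val h else 0 := by
  rw [dogma, dogmaAux_append ξ π e0 h [] ((a, e) :: c)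
    (by intro k hk; simpa using hcons k hk)]
  simp only [List.nil_append]
  rw [dogmaAux_cons, if_neg haπ]

lemma extendH_struct (p : Policy A E) :
    ∀ (l : List E) (h : Hist A E), ∃ c : Hist A E,
      extendH p h l = h ++ c ∧ c.map Prod.snd = l
  | [], h => ⟨[], by simp [extendH]⟩
  | e :: l, h => by
      obtain ⟨c, hc1, hc2⟩ := extendH_struct p l (h ++ [(p h, e)])
      exact ⟨(p h, e) :: c, by simp [extendH, hc1], by simp [hc2]⟩

lemma extendH_cons (p : Policy A E) (h : Hist A E) (e : E) (l : List E) :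
    ∃ c : Hist A E,
      extendH p h (e :: l) = h ++ (p h, e) :: c ∧ c.map Prod.snd = l := by
  obtain ⟨c, hc1, hc2⟩ := extendH_struct p l (h ++ [(p h, e)])
  exact ⟨c, by simp [extendH, hc1], hc2⟩

lemma sum_extendH_le (ξ : CCS A E) (p : Policy A E) :
    ∀ (n : ℕ) (h : Hist A E),
      ∑ es : Fin (n + 1) → E, ξ.val (extendH p h (List.ofFn es)) ≤ ξ.val h
  | 0, h => by
      have key : ∀ x : E,
          extendH p h (List.ofFn (fun _ : Fin 1 => x)) = h ++ [(p h, x)] := by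
        intro x; simp [List.ofFn_succ, extendH]
      rw [← Equiv.sum_comp (Equiv.funUnique (Fin 1) E).symm
        (fun es => ξ.val (extendH p h (List.ofFn es)))]
      calc ∑ x : E, ξ.val (extendH p h (List.ofFn ((Equiv.funUnique (Fin 1) E).symm x)))
          = ∑ x : E, ξ.val (h ++ [(p h, x)]) := by
            refine Finset.sum_congr rfl fun x _ => ?_
            rw [show ((Equiv.funUnique (Fin 1) E).symm x : Fin 1 → E)
              = fun _ : Fin 1 => x from rfl, key]
        _ ≤ ξ.val h := ξ.chrono h (p h)
  | n + 1, h => by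
      have key : ∀ (e : E) (es : Fin (n + 1) → E),
          extendH p h (List.ofFn (Fin.cons e es)) =
            extendH p (h ++ [(p h, e)]) (List.ofFn es) := by
        intro e es
        rw [List.ofFn_succ]
        simp [extendH, Fin.cons_succ, Fin.cons_zero]
      rw [← Equiv.sum_comp (Fin.consEquiv (fun _ : Fin (n + 2) => E))
        (fun es => ξ.val (extendH p h (List.ofFn es)))]
      have hrw : ∀ x : E × (Fin (n + 1) → E),
          ξ.val (extendH p h (List.ofFn ((Fin.consEquiv (fun _ : Fin (n + 2) => E)) x))) =
            ξ.val (extendH p (h ++ [(p h, x.1)]) (List.ofFn x.2)) := by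
        rintro ⟨e, es⟩
        rw [show ((Fin.consEquiv (fun _ : Fin (n + 2) => E)) (e, es) : Fin (n + 2) → E)
          = Fin.cons e es from rfl, key]
      calc ∑ x : E × (Fin (n + 1) → E),
            ξ.val (extendH p h (List.ofFn ((Fin.consEquiv (fun _ : Fin (n + 2) => E)) x)))
          = ∑ e : E, ∑ es : Fin (n + 1) → E,
              ξ.val (extendH p (h ++ [(p h, e)]) (List.ofFn es)) := by
            rw [Fintype.sum_prod_type]
            exact Finset.sum_congr rfl fun e _ =>
              Finset.sum_congr rfl fun es _ => hrw (e, es)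
        _ ≤ ∑ e : E, ξ.val (h ++ [(p h, e)]) :=
            Finset.sum_le_sum fun e _ => sum_extendH_le ξ p n (h ++ [(p h, e)])
        _ ≤ ξ.val h := ξ.chrono h (p h)

end DevAux

/-- **Deviating is bad.** With `ξ' = (1/2)·ν + (ε/2)·ξ` for the `π`-dogmatic `ν`, on any
`π`-consistent history the optimal value after any deviating action is `≤ ε/(1+ε) < ε`. -/
theorem dogmatic_deviation {A E : Type*} [Fintype A] [Nonempty A] [Fintype E] [Nonempty E]
    (γ : ℕ → ℝ) (hγ0 : ∀ t, 0 ≤ γ t) (hγs : Summable γ)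
    (r : E → ℝ) (hr : ∀ e : E, 0 ≤ r e ∧ r e ≤ 1)
    (ξ : CCS A E) (π : Policy A E) (e0 : E) (hr0 : r e0 = 0)
    (ε : ℝ) (hε0 : 0 < ε) (hε1 : ε ≤ 1)
    (ν ξ' : CCS A E)
    (hν : ∀ h : Hist A E, ν.val h = dogma ξ π e0 h)
    (hξ' : ∀ h : Hist A E, ξ'.val h = (1 / 2) * ν.val h + (ε / 2) * ξ.val h)
    (h : Hist A E) (hcons : Consistent π h)
    (hΓ : 0 < Gam γ (h.length + 1)) (hpos : 0 < ξ.val h) :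
    ∀ β : A, β ≠ π h →
      VOptAct γ r ξ' h β ≤ ε / (1 + ε) ∧ ε / (1 + ε) < ε := by
  intro β hβ
  have h1ε : (0 : ℝ) < 1 + ε := by linarith
  have hright : ε / (1 + ε) < ε := by
    rw [div_lt_iff₀ h1ε]; nlinarith
  refine ⟨?_, hright⟩
  have hνh : ν.val h = ξ.val h := by
    rw [hν]; exact dogma_of_consistent ξ π e0 h hcons
  have hξ'h : ξ'.val h = ((1 + ε) / 2) * ξ.val h := by
    rw [hξ', hνh]; ring
  have hξ'pos : 0 < ξ'.val h := by
    rw [hξ'h]; exact mul_pos (by linarith) hpos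
  apply ciSup_le
  intro π''
  set p : Policy A E := fun h' => if h' = h then β else π'' h' with hp
  have hph : p h = β := by simp [hp]
  rw [Vact, ← hp, V, if_pos ⟨hΓ, hξ'pos⟩]
  set t := h.length + 1 with ht
  set x := ξ.val h with hx
  set Γ := Gam γ t with hΓdef
  -- the ξ-part of each inner sum
  set c : ℕ → ℝ := fun n => ∑ es : Fin (n + 1) → E,
    r (es (Fin.last n)) * ξ.val (extendH p h (List.ofFn es)) with hc
  -- the ν-part vanishes
  have hνzero : ∀ (n : ℕ) (es : Fin (n + 1) → E),
      r (es (Fin.last n)) * ν.val (extendH p h (List.ofFn es)) = 0 := by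
    intro n es
    obtain ⟨d, hd1, hd2⟩ := extendH_cons p h (es 0) (List.ofFn fun i => es i.succ)
    have hofn : List.ofFn es = es 0 :: List.ofFn fun i => es i.succ := List.ofFn_succ
    rw [hofn, hd1, hν, hph,
      dogma_of_deviate ξ π e0 h hcons β hβ (es 0) d]
    by_cases hcond : es 0 = e0 ∧ ∀ q ∈ d, q.2 = e0
    · rw [if_pos hcond]
      have hmem : es (Fin.last n) ∈ List.ofFn es :=
        List.mem_ofFn.2 ⟨Fin.last n, rfl⟩
      rw [hofn] at hmem
      have : es (Fin.last n) = e0 := by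
        rcases List.mem_cons.1 hmem with h' | h'
        · rw [h']; exact hcond.1
        · obtain ⟨q, hq, hq2⟩ := List.mem_map.1 (hd2 ▸ h')
          rw [← hq2]; exact hcond.2 q hq
      rw [this, hr0, zero_mul]
    · rw [if_neg hcond, mul_zero]
  -- each term of the series
  have hterm : ∀ n : ℕ,
      γ (t + n) * ∑ es : Fin (n + 1) → E,
        r (es (Fin.last n)) * ξ'.val (extendH p h (List.ofFn es)) =
      (ε / 2) * (γ (t + n) * c n) := by
    intro n
    have : ∑ es : Fin (n + 1) → E,
        r (es (Fin.last n)) * ξ'.val (extendH p h (List.ofFn es)) = (ε / 2) * c n := by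
      rw [hc, Finset.mul_sum]
      refine Finset.sum_congr rfl fun es _ => ?_
      rw [hξ']
      have := hνzero n es
      ring_nf
      ring_nf at this
      nlinarith [this]
    rw [this]; ring
  -- bounds on c
  have hc0 : ∀ n, 0 ≤ c n := fun n =>
    Finset.sum_nonneg fun es _ => mul_nonneg (hr _).1 (ξ.nonneg _)
  have hcx : ∀ n, c n ≤ x := by
    intro n
    refine le_trans (Finset.sum_le_sum fun es _ =>
      mul_le_of_le_one_left (ξ.nonneg _) (hr _).2) ?_
    exact sum_extendH_le ξ p n h
  -- summability
  have hsg : Summable fun n => γ (t + n) :=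
    ((summable_nat_add_iff t).2 hγs).congr fun n => by rw [add_comm]
  have hstop : Summable fun n => γ (t + n) * x := hsg.mul_right x
  have hsf : Summable fun n => γ (t + n) * c n :=
    Summable.of_nonneg_of_le (fun n => mul_nonneg (hγ0 _) (hc0 n))
      (fun n => mul_le_mul_of_nonneg_left (hcx n) (hγ0 _)) hstop
  have hT : ∑' n, γ (t + n) * c n ≤ Γ * x := by
    calc ∑' n, γ (t + n) * c n ≤ ∑' n, γ (t + n) * x :=
          Summable.tsum_le_tsum (fun n => mul_le_mul_of_nonneg_left (hcx n) (hγ0 _)) hsf hstop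
      _ = Γ * x := by rw [tsum_mul_right, hΓdef, Gam]
  have hT0 : 0 ≤ ∑' n, γ (t + n) * c n :=
    tsum_nonneg fun n => mul_nonneg (hγ0 _) (hc0 n)
  -- rewrite the series
  have hS : ∑' n : ℕ, γ (t + n) * ∑ es : Fin (n + 1) → E,
      r (es (Fin.last n)) * ξ'.val (extendH p h (List.ofFn es)) =
      (ε / 2) * ∑' n, γ (t + n) * c n := by
    rw [← tsum_mul_left]
    exact tsum_congr hterm
  rw [hS, hξ'h]
  have hΓ0 : (0 : ℝ) < Γ := hΓ
  have hx0 : (0 : ℝ) < x := hpos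
  calc 1 / (Γ * ((1 + ε) / 2 * x)) * ((ε / 2) * ∑' n, γ (t + n) * c n)
      ≤ 1 / (Γ * ((1 + ε) / 2 * x)) * ((ε / 2) * (Γ * x)) := by
        refine mul_le_mul_of_nonneg_left ?_ ?_
        · exact mul_le_mul_of_nonneg_left hT (by linarith)
        · positivity
    _ = ε / (1 + ε) := by
        field_simp
end
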